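/- Let T : ℝ⁴ → ℝ⁴ be the linear map T(L₁, L₂, L₃, L₄) = (L₁, L₁ + (1/3)L₂, (2/3)L₂, L₃), and let ζ = (1, 3/2, 1, 1). Then there exists r₀ ∈ (0, 1/2) such that for every h > 0 there exists M₀ ≥ 1 for which the truncated sector C̃ = { s(ζ + ε) : s ≥ M₀, ε ∈ ℝ⁴, ε₁ = 0, |ε_i| ≤ r₀ for all i } has the following two properties: (a) every L = (L₁, L₂, L₃, L₄) ∈ C̃ satisfies 2L₁ − L₃ ≥ 0 and 2L₁ + 2L₂ + 2L₃ − L₄ ≥ 0; (b) the affine map L ↦ T L + h e₂ maps C̃ into itself, where e₂ = (0,1,0,0). -/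

import Mathlib

open Set

noncomputable section

/-- The linear evolution `T(L₁,L₂,L₃,L₄) = (L₁, L₁ + L₂/3, (2/3)L₂, L₃)`. -/
def Tmap4 (L : Fin 4 → ℝ) : Fin 4 → ℝ :=
  ![L 0, L 0 + (1 / 3) * L 1, (2 / 3) * L 1, L 2]

/-- The vector `ζ = (1, 3/2, 1, 1)`. -/
def zeta4 : Fin 4 → ℝ := ![1, 3 / 2, 1, 1]

/-- The truncated sector around the ray through `ζ`. -/
def sector4 (r₀ M₀ : ℝ) : Set (Fin 4 → ℝ) :=
  {L | ∃ (s : ℝ) (ε : Fin 4 → ℝ), M₀ ≤ s ∧ ε 0 = 0 ∧ (∀ i, |ε i| ≤ r₀) ∧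
    L = fun i => s * (zeta4 i + ε i)}

/-- Admissibility and invariance of a truncated sector under the affine
parameter evolution `L ↦ T L + h e₂`. -/
theorem admissible_truncated_sector :
    ∃ r₀ : ℝ, 0 < r₀ ∧ r₀ < 1 / 2 ∧
      ∀ h : ℝ, 0 < h → ∃ M₀ : ℝ, 1 ≤ M₀ ∧
        (∀ L ∈ sector4 r₀ M₀,
          0 ≤ 2 * L 0 - L 2 ∧ 0 ≤ 2 * L 0 + 2 * L 1 + 2 * L 2 - L 3) ∧
        (∀ L ∈ sector4 r₀ M₀,
          (fun i => Tmap4 L i + h * (![0, 1, 0, 0] : Fin 4 → ℝ) i) ∈ sector4 r₀ M₀) := by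
  refine ⟨1/4, by norm_num, by norm_num, ?_⟩
  intro h hh
  refine ⟨max 1 (6*h), le_max_left _ _, ?_, ?_⟩
  · rintro L ⟨s, ε, hs, hε0, hε, rfl⟩
    have hs1 : (1:ℝ) ≤ s := le_trans (le_max_left _ _) hs
    have h1 := abs_le.mp (hε 1)
    have h2 := abs_le.mp (hε 2)
    have h3 := abs_le.mp (hε 3)
    simp only [zeta4, Matrix.cons_val_zero, Matrix.cons_val_one, Matrix.head_cons,
      Matrix.cons_val_two, Matrix.tail_cons, Matrix.cons_val_three]
    constructor
    · nlinarith [h2.1, h2.2]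
    · nlinarith [h1.1, h2.1, h3.2]
  · rintro L ⟨s, ε, hs, hε0, hε, rfl⟩
    have hs1 : (1:ℝ) ≤ s := le_trans (le_max_left _ _) hs
    have hs0 : (0:ℝ) < s := lt_of_lt_of_le one_pos hs1
    have hs6 : 6 * h ≤ s := le_trans (le_max_right _ _) hs
    have hhs : h / s ≤ 1 / 6 := by
      rw [div_le_div_iff₀ hs0 (by norm_num)]
      linarith
    have hhs0 : 0 ≤ h / s := div_nonneg hh.le hs0.le
    have h1 := abs_le.mp (hε 1)
    refine ⟨s, ![0, ε 1 / 3 + h / s, 2/3 * ε 1, ε 2], hs, by simp, ?_, ?_⟩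
    · intro i
      fin_cases i
      · show |(0:ℝ)| ≤ 1/4
        norm_num
      · show |ε 1 / 3 + h / s| ≤ 1/4
        rw [abs_le]
        constructor <;> nlinarith [h1.1, h1.2]
      · show |2/3 * ε 1| ≤ 1/4
        rw [abs_le]
        constructor <;> nlinarith [h1.1, h1.2]
      · show |ε 2| ≤ 1/4
        exact hε 2
    · funext i
      fin_cases i <;>
        simp only [Tmap4, zeta4, Matrix.cons_val_zero, Matrix.cons_val_one, Matrix.head_cons,
          Matrix.cons_val_two, Matrix.tail_cons, Matrix.cons_val_three, hε0,
          Fin.zero_eta, Fin.mk_one, Fin.reduceFinMk] <;>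
        field_simp <;> ring
end
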